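/- Let d ≥ 3, and let γ, w_m be reals with w_m ≠ 1 and 1 - 2γ(1+w_m)/(1-w_m) > 0 and 1 - 2γ(d-1)(1+w_m)/(d-2) ≠ 0. Then the point (x_φ, x_V) = (√(1 - 2γ(1+w_m)/(1-w_m)), 0) satisfies the fixed-point equations of the autonomous system, i.e., both right-hand sides of the evolution equations for x_φ and x_V vanish at this point. -/
import Mathlib


theorem stmt_1 (d : ℕ) (hd : 3 ≤ d) (γ wm lV : ℝ)
    (hw : wm ≠ 1)
    (hpos : 0 < 1 - 2*γ*(1+wm)/(1-wm))
    (B : ℝ) (hB : B = 1 - 2*γ*((d:ℝ)-1)*(1+wm)/((d:ℝ)-2)) (hB0 : B ≠ 0)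
    (xφ xV : ℝ)
    (hxφ : xφ = Real.sqrt (1 - 2*γ*(1+wm)/(1-wm))) (hxV : xV = 0) :
    ((1 - 2*γ*(d:ℝ)/((d:ℝ)-2))*(1+wm)/B - 2)*xφ
      + 2*lV*Real.sqrt (((d:ℝ)-2)/((d:ℝ)-1))*xV^2
      + ((1-wm)/B)*xφ^3 - ((1+wm)/B)*xφ*xV^2 = 0
    ∧ ((1 - 2*γ*(d:ℝ)/((d:ℝ)-2))*(1+wm)/B)*xV
      - lV*Real.sqrt (((d:ℝ)-2)/((d:ℝ)-1))*xφ*xV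
      + ((1-wm)/B)*xV*xφ^2 - ((1+wm)/B)*xV^3 = 0 := by
  have hd2 : ((d:ℝ)-2) ≠ 0 := by
    have : (3:ℝ) ≤ (d:ℝ) := by exact_mod_cast hd
    nlinarith
  have hw' : (1 - wm) ≠ 0 := sub_ne_zero.mpr (Ne.symm hw)
  have hsq : xφ^2 = 1 - 2*γ*(1+wm)/(1-wm) := by
    rw [hxφ, Real.sq_sqrt hpos.le]
  subst hxV
  have key : ((1 - 2*γ*(d:ℝ)/((d:ℝ)-2))*(1+wm) - 2*B) + (1-wm)*xφ^2 = 0 := by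
    rw [hsq, hB]
    field_simp
    ring
  exact ⟨by linear_combination (xφ/B) * key + 2 * xφ * mul_inv_cancel₀ hB0, by ring⟩
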